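/- Let (c^C_{DE})_{C,D,E ∈ {1,…,n}} be scalars antisymmetric in the lower indices (c^C_{DE} = −c^C_{ED}). Then for all indices A, B ∈ {1,…,n}: (1/2) Σ_{C,D,E} c^C_{DE} e^D ∧ e^E ∧ e^{(n-3)}_{ABC} = Σ_C c^C_{BC} e^{(n-1)}_A − Σ_C c^C_{AC} e^{(n-1)}_B + Σ_C c^C_{AB} e^{(n-1)}_C. -/

import Mathlib

noncomputable section

variable (𝕂 : Type*) [Field 𝕂] [CharZero 𝕂] (E : Type*) [AddCommGroup E] [Module 𝕂 E]

/-- Iterated interior product: `icontr [X₁, …, X_p] α = i_{X_p}(⋯(i_{X₁} α))`; this realises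
the interior product `(X₁ ∧ ⋯ ∧ X_p) ⌟ α` of a decomposable `p`-vector of the dual space
against `α`, where `i_X` contracts the first argument of `α` with `X`. -/
def icontr (L : List (Module.Dual 𝕂 E)) (α : ExteriorAlgebra 𝕂 E) : ExteriorAlgebra 𝕂 E :=
  L.foldl (fun a d => CliffordAlgebra.contractLeft d a) α

/-- The wedge product of a list of vectors, as an element of the exterior algebra. -/
def wedgeList (v : List E) : ExteriorAlgebra 𝕂 E := (v.map (ExteriorAlgebra.ι 𝕂)).prod

variable {n : ℕ}

/-- `vol := e^1 ∧ ⋯ ∧ e^n`. -/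
def volB (e : Module.Basis (Fin n) 𝕂 E) : ExteriorAlgebra 𝕂 E :=
  wedgeList 𝕂 E ((List.finRange n).map e)

/-- The dual form `e^{(n-p)}_{A₁…A_p} := (u_{A₁} ∧ ⋯ ∧ u_{A_p}) ⌟ vol`, for an arbitrary
list of indices `A₁, …, A_p`. -/
def dualFormL (e : Module.Basis (Fin n) 𝕂 E) (L : List (Fin n)) : ExteriorAlgebra 𝕂 E :=
  icontr 𝕂 E (L.map e.dualBasis) (volB 𝕂 E e)


variable {𝕂 E}

local notation "ιv" => ExteriorAlgebra.ι 𝕂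
local infixl:70 "⌟" => CliffordAlgebra.contractLeft (R := 𝕂) (M := E) (Q := 0)

omit [CharZero 𝕂] in
lemma ι_mul_volB (e : Module.Basis (Fin n) 𝕂 E) (D : Fin n) :
    ExteriorAlgebra.ι 𝕂 (e D) * volB 𝕂 E e = 0 := by
  have := ExteriorAlgebra.ι_mul_prod_list (R := 𝕂) (fun i => e i) D
  simpa [volB, wedgeList, List.ofFn_eq_map, List.map_map, Function.comp_def] using this

omit [CharZero 𝕂] in
lemma ι_mul_contract (d : Module.Dual 𝕂 E) (x : E) (α : ExteriorAlgebra 𝕂 E) :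
    ExteriorAlgebra.ι 𝕂 x * (CliffordAlgebra.contractLeft d α)
      = d x • α - CliffordAlgebra.contractLeft d (ExteriorAlgebra.ι 𝕂 x * α) := by
  have := CliffordAlgebra.contractLeft_ι_mul (Q := (0 : QuadraticForm 𝕂 E)) (d := d) x α
  rw [this]; abel

omit [CharZero 𝕂] in
lemma step1 (e : Module.Basis (Fin n) 𝕂 E) (X D : Fin n) :
    ιv (e D) * (e.dualBasis X⌟volB 𝕂 E e) = e.dualBasis X (e D) • volB 𝕂 E e := by
  rw [ι_mul_contract, ι_mul_volB, map_zero, sub_zero]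

omit [CharZero 𝕂] in
lemma step2 (e : Module.Basis (Fin n) 𝕂 E) (X Y D : Fin n) :
    ιv (e D) * (e.dualBasis Y⌟(e.dualBasis X⌟volB 𝕂 E e))
      = e.dualBasis Y (e D) • (e.dualBasis X⌟volB 𝕂 E e)
        - e.dualBasis X (e D) • (e.dualBasis Y⌟volB 𝕂 E e) := by
  rw [ι_mul_contract, step1, map_smul]

omit [CharZero 𝕂] in
lemma step3 (e : Module.Basis (Fin n) 𝕂 E) (X Y Z D : Fin n) :
    ιv (e D) * (e.dualBasis Z⌟(e.dualBasis Y⌟(e.dualBasis X⌟volB 𝕂 E e)))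
      = e.dualBasis Z (e D) • (e.dualBasis Y⌟(e.dualBasis X⌟volB 𝕂 E e))
        - e.dualBasis Y (e D) • (e.dualBasis Z⌟(e.dualBasis X⌟volB 𝕂 E e))
        + e.dualBasis X (e D) • (e.dualBasis Z⌟(e.dualBasis Y⌟volB 𝕂 E e)) := by
  rw [ι_mul_contract, step2, map_sub, map_smul, map_smul]; abel

omit [CharZero 𝕂] in
lemma dF1 (e : Module.Basis (Fin n) 𝕂 E) (A : Fin n) :
    dualFormL 𝕂 E e [A] = e.dualBasis A⌟volB 𝕂 E e := rfl

omit [CharZero 𝕂] in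
lemma dF3 (e : Module.Basis (Fin n) 𝕂 E) (A B C : Fin n) :
    dualFormL 𝕂 E e [A, B, C]
      = e.dualBasis C⌟(e.dualBasis B⌟(e.dualBasis A⌟volB 𝕂 E e)) := rfl

omit [CharZero 𝕂] in
lemma key (e : Module.Basis (Fin n) 𝕂 E) (A B C D E' : Fin n) :
    ιv (e D) * (ιv (e E') * dualFormL 𝕂 E e [A, B, C])
      = (e.dualBasis C (e E') * e.dualBasis B (e D)) • dualFormL 𝕂 E e [A]
        - (e.dualBasis C (e E') * e.dualBasis A (e D)) • dualFormL 𝕂 E e [B]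
        - (e.dualBasis B (e E') * e.dualBasis C (e D)) • dualFormL 𝕂 E e [A]
        + (e.dualBasis B (e E') * e.dualBasis A (e D)) • dualFormL 𝕂 E e [C]
        + (e.dualBasis A (e E') * e.dualBasis C (e D)) • dualFormL 𝕂 E e [B]
        - (e.dualBasis A (e E') * e.dualBasis B (e D)) • dualFormL 𝕂 E e [C] := by
  rw [dF3, step3, mul_add, mul_sub, mul_smul_comm, mul_smul_comm, mul_smul_comm,
    step2, step2, step2, dF1, dF1, dF1]
  simp only [smul_sub, smul_smul]
  module

/-- for scalars `c^C_{DE}` antisymmetric in the lower indices,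
`(1/2) Σ_{C,D,E} c^C_{DE} e^D ∧ e^E ∧ e^{(n-3)}_{ABC}
  = Σ_C c^C_{BC} e^{(n-1)}_A − Σ_C c^C_{AC} e^{(n-1)}_B + Σ_C c^C_{AB} e^{(n-1)}_C`. -/
theorem structure_constants_contraction_identity
    (e : Module.Basis (Fin n) 𝕂 E) (c : Fin n → Fin n → Fin n → 𝕂)
    (hanti : ∀ C D E' : Fin n, c C D E' = - c C E' D) (A B : Fin n) :
    ((1 : 𝕂) / 2) • ∑ C : Fin n, ∑ D : Fin n, ∑ E' : Fin n,
        c C D E' •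
          (ExteriorAlgebra.ι 𝕂 (e D) * ExteriorAlgebra.ι 𝕂 (e E') * dualFormL 𝕂 E e [A, B, C])
      = (∑ C : Fin n, c C B C • dualFormL 𝕂 E e [A])
          - (∑ C : Fin n, c C A C • dualFormL 𝕂 E e [B])
          + ∑ C : Fin n, c C A B • dualFormL 𝕂 E e [C] := by
  simp only [mul_assoc, key e A B]
  simp only [smul_sub, smul_add, smul_smul, Finset.sum_sub_distrib, Finset.sum_add_distrib]
  simp only [Module.Basis.dualBasis_apply_self, mul_ite, ite_mul, mul_one, mul_zero, one_mul,
    zero_mul, ite_smul, zero_smul, Finset.sum_ite_eq', Finset.mem_univ, if_true,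
    Finset.sum_ite_eq, Finset.sum_const_zero, Finset.sum_ite_irrel]
  have h1 : ∀ C : Fin n, c C C B = - c C B C := fun C => hanti C C B
  have h2 : ∀ C : Fin n, c C C A = - c C A C := fun C => hanti C C A
  have h3 : ∀ C : Fin n, c C B A = - c C A B := fun C => hanti C B A
  simp only [h1, h2, h3, neg_smul, Finset.sum_neg_distrib]
  module
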